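/- arXiv:2404.11433 — 4 statements merged into one kernel-verified Lean document; each statement's English description precedes it below -/
import Mathlib

section
/- Let m ≥ 1, F ≥ 1 be real, and let v, w ∈ [0,1]^m ⊆ ℝ^m be nonzero vectors. Suppose there exist indices i ≠ j such that w_i = v_i + ℓ₁ and w_j = v_j − ℓ₂ with ℓ₁ ≥ 1/F and ℓ₂ ≥ 1/F. Let φ be the angle between v and w. Then sin(φ) ≥ 1/(√m · F). -/
open InnerProductGeometry RealInnerProductSpace

lemma comp_le_norm {m : ℕ} (x : EuclideanSpace ℝ (Fin m)) (k : Fin m) :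
    |x k| ≤ ‖x‖ := by
  rw [EuclideanSpace.norm_eq]
  have h1 : |x k| = Real.sqrt (‖x k‖ ^ 2) := by
    rw [Real.sqrt_sq_eq_abs]; simp [abs_abs]
  rw [h1]
  apply Real.sqrt_le_sqrt
  exact Finset.single_le_sum (f := fun i => ‖x i‖ ^ 2) (fun i _ => sq_nonneg _)
    (Finset.mem_univ k)

theorem sin_angle_lower_bound (m : ℕ) (hm : 1 ≤ m) (F : ℝ) (hF : 1 ≤ F)
    (v w : EuclideanSpace ℝ (Fin m))
    (hv : ∀ k, 0 ≤ v k ∧ v k ≤ 1) (hw : ∀ k, 0 ≤ w k ∧ w k ≤ 1)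
    (hv0 : v ≠ 0) (hw0 : w ≠ 0)
    (i j : Fin m) (hij : i ≠ j) (ℓ₁ ℓ₂ : ℝ)
    (hℓ₁ : 1 / F ≤ ℓ₁) (hℓ₂ : 1 / F ≤ ℓ₂)
    (hi : w i = v i + ℓ₁) (hj : w j = v j - ℓ₂) :
    1 / (Real.sqrt m * F) ≤ Real.sin (InnerProductGeometry.angle v w) := by
  have hF0 : (0:ℝ) < F := lt_of_lt_of_le one_pos hF
  have hFi : (0:ℝ) < 1 / F := by positivity
  have hvn : (0:ℝ) < ‖v‖ := norm_pos_iff.mpr hv0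
  have hwn : (0:ℝ) < ‖w‖ := norm_pos_iff.mpr hw0
  have hvj : ℓ₂ ≤ v j := by have := (hw j).1; rw [hj] at this; linarith
  -- inner product nonneg
  have hinner : (0:ℝ) ≤ ⟪v, w⟫ := by
    rw [PiLp.inner_apply]
    apply Finset.sum_nonneg
    intro k _
    simp only [RCLike.inner_apply, conj_trivial]
    exact mul_nonneg (hw k).1 (hv k).1
  set t : ℝ := ⟪v, w⟫ / ‖w‖ ^ 2 with ht
  have ht0 : 0 ≤ t := div_nonneg hinner (by positivity)
  -- lower bound on a component of v - t • w
  have hcomp : 1 / F ≤ ‖v - t • w‖ := by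
    rcases le_or_gt t 1 with hcase | hcase
    · refine le_trans ?_ (comp_le_norm (v - t • w) j)
      have hval : (v - t • w) j = v j - t * w j := by
        simp [PiLp.sub_apply, PiLp.smul_apply, smul_eq_mul]
      rw [hval, hj]
      have : 1 / F ≤ v j - t * (v j - ℓ₂) := by nlinarith [hvj, hℓ₂]
      calc (1:ℝ)/F ≤ v j - t * (v j - ℓ₂) := this
        _ ≤ |v j - t * (v j - ℓ₂)| := le_abs_self _
    · refine le_trans ?_ (comp_le_norm (v - t • w) i)
      have hval : (v - t • w) i = v i - t * w i := by
        simp [PiLp.sub_apply, PiLp.smul_apply, smul_eq_mul]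
      rw [hval, hi]
      have h1 : 1 / F ≤ -(v i - t * (v i + ℓ₁)) := by
        nlinarith [(hv i).1, hℓ₁]
      calc (1:ℝ)/F ≤ -(v i - t * (v i + ℓ₁)) := h1
        _ ≤ |v i - t * (v i + ℓ₁)| := neg_le_abs _
  -- Gram identity
  have hexp : ‖v - t • w‖ ^ 2 = ‖v‖ ^ 2 - 2 * t * ⟪v, w⟫ + t ^ 2 * ‖w‖ ^ 2 := by
    rw [norm_sub_sq_real, real_inner_smul_right, norm_smul]
    simp [mul_pow, sq_abs]
    ring
  have hw2 : (‖w‖:ℝ) ^ 2 ≠ 0 := by positivity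
  have hgram : ‖v‖ ^ 2 * ‖w‖ ^ 2 - ⟪v, w⟫ * ⟪v, w⟫ = ‖v - t • w‖ ^ 2 * ‖w‖ ^ 2 := by
    rw [hexp, ht]
    field_simp
    ring
  have hsin := InnerProductGeometry.sin_angle_mul_norm_mul_norm v w
  rw [real_inner_self_eq_norm_sq, real_inner_self_eq_norm_sq] at hsin
  have hsqrt : Real.sqrt (‖v‖ ^ 2 * ‖w‖ ^ 2 - ⟪v, w⟫ * ⟪v, w⟫)
      = ‖v - t • w‖ * ‖w‖ := by
    rw [hgram, show ‖v - t • w‖ ^ 2 * ‖w‖ ^ 2 = (‖v - t • w‖ * ‖w‖) ^ 2 by ring,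
      Real.sqrt_sq (by positivity)]
  rw [hsqrt] at hsin
  -- norm of v bounded by sqrt m
  have hvle : ‖v‖ ≤ Real.sqrt m := by
    rw [EuclideanSpace.norm_eq]
    apply Real.sqrt_le_sqrt
    calc ∑ k, ‖v k‖ ^ 2 ≤ ∑ k : Fin m, (1:ℝ) := by
          apply Finset.sum_le_sum
          intro k _
          have h1 := (hv k).1
          have h2 := (hv k).2
          rw [Real.norm_eq_abs, abs_of_nonneg h1]
          nlinarith
      _ = m := by simp
  have hsm : (0:ℝ) < Real.sqrt m := Real.sqrt_pos.mpr (by exact_mod_cast hm)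
  -- conclude
  have hkey : Real.sin (angle v w) * (‖v‖ * ‖w‖) ≥ (1 / F) * ‖w‖ := by
    rw [hsin]
    exact mul_le_mul_of_nonneg_right hcomp hwn.le
  have hvsm : ‖v‖ ≤ Real.sqrt m := hvle
  rw [ge_iff_le, div_mul_eq_mul_div, div_le_iff₀ hF0] at hkey
  have h2 : 1 / (Real.sqrt m * F) ≤ 1 / (‖v‖ * F) := by
    apply one_div_le_one_div_of_le (by positivity)
    exact mul_le_mul_of_nonneg_right hvsm hF0.le
  refine h2.trans ?_
  rw [div_le_iff₀ (by positivity)]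
  have hfin : (1:ℝ) * ‖w‖ ≤ (Real.sin (angle v w) * (‖v‖ * F)) * ‖w‖ := by
    calc (1:ℝ) * ‖w‖ = 1 * ‖w‖ := rfl
      _ ≤ Real.sin (angle v w) * (‖v‖ * ‖w‖) * F := hkey
      _ = (Real.sin (angle v w) * (‖v‖ * F)) * ‖w‖ := by ring
  exact le_of_mul_le_mul_right hfin hwn
end

section
/- Let m ≥ 1 and p ≥ 1 be natural numbers, and let t ∈ (ℝ≥0)^m satisfy t₁ + ⋯ + t_m = 1. Then there exist nonnegative integers a₁,…,a_m with a₁ + ⋯ + a_m = p such that |t_i − a_i/p| ≤ 1/p for every i ∈ {1,…,m}. -/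
theorem simplex_net (m p : ℕ) (hm : 1 ≤ m) (hp : 1 ≤ p) (t : Fin m → ℝ)
    (ht0 : ∀ i, 0 ≤ t i) (ht1 : ∑ i, t i = 1) :
    ∃ a : Fin m → ℕ, (∑ i, a i = p) ∧ ∀ i, |t i - (a i : ℝ) / p| ≤ 1 / p := by
  have hp0 : (0 : ℝ) < p := by exact_mod_cast hp
  set b : Fin m → ℕ := fun i => ⌊(p : ℝ) * t i⌋₊ with hb
  have hb1 : ∀ i, (b i : ℝ) ≤ p * t i := fun i =>
    Nat.floor_le (mul_nonneg hp0.le (ht0 i))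
  have hb2 : ∀ i, (p : ℝ) * t i < b i + 1 := fun i => Nat.lt_floor_add_one _
  set S : ℕ := ∑ i, b i with hS
  have hSp : S ≤ p := by
    have : (S : ℝ) ≤ p := by
      calc (S : ℝ) = ∑ i, (b i : ℝ) := by push_cast [hS]; ring
        _ ≤ ∑ i, (p : ℝ) * t i := Finset.sum_le_sum fun i _ => hb1 i
        _ = p := by rw [← Finset.mul_sum, ht1, mul_one]
    exact_mod_cast this
  have hdm : p - S < m := by
    have : (p : ℝ) < S + m := by
      have h1 : (p : ℝ) = ∑ i, (p : ℝ) * t i := by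
        rw [← Finset.mul_sum, ht1, mul_one]
      have h2 : ∑ i, ((p : ℝ) * t i) < ∑ i, ((b i : ℝ) + 1) :=
        Finset.sum_lt_sum_of_nonempty (by simp [Finset.univ_nonempty_iff]; exact Fin.pos_iff_nonempty.mp hm) fun i _ => hb2 i
      have h3 : ∑ i, ((b i : ℝ) + 1) = S + m := by
        rw [Finset.sum_add_distrib]
        push_cast [hS]
        simp [Finset.card_univ]
      linarith [h1 ▸ h2.trans_eq h3]
    have : p < S + m := by exact_mod_cast this
    omega
  set d : ℕ := p - S with hd
  refine ⟨fun i => b i + if (i : ℕ) < d then 1 else 0, ?_, ?_⟩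
  · have hcard : (Finset.univ.filter (fun i : Fin m => (i : ℕ) < d)).card = d := by
      have : (Finset.univ.filter (fun i : Fin m => (i : ℕ) < d)) = Finset.Iio ⟨d, hdm⟩ := by
        ext i
        simp [Finset.mem_Iio, Fin.lt_def]
      rw [this, Fin.card_Iio]
    rw [Finset.sum_add_distrib]
    simp only [Finset.sum_ite, Finset.sum_const, smul_eq_mul, mul_one,
      Finset.sum_const_zero, add_zero]
    rw [hcard]
    omega
  · intro i
    have hc : |(p : ℝ) * t i - (b i + if (i : ℕ) < d then 1 else 0 : ℕ)| ≤ 1 := by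
      rw [abs_le]
      push_cast
      split <;> constructor <;> [skip; skip; skip; skip] <;>
        first
        | linarith [hb1 i, hb2 i]
    have heq : t i - ((b i + if (i : ℕ) < d then 1 else 0 : ℕ) : ℝ) / p
        = ((p : ℝ) * t i - (b i + if (i : ℕ) < d then 1 else 0 : ℕ)) / p := by
      field_simp
    rw [heq, abs_div, abs_of_pos hp0]
    gcongr
end

section
/- With m-LOTZ defined blockwise as above (m even, m/2 dividing n), the set of Pareto-optimal fitness vectors of m-LOTZ has cardinality exactly (2n/m + 1)^{m/2}. -/
/-- Number of leading ones of a block `b : Fin L → Bool`. -/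
def leadingOnes {L : ℕ} (b : Fin L → Bool) : ℕ :=
  (Finset.univ.filter (fun i : Fin L => ∀ j : Fin L, j ≤ i → b j = true)).card

/-- Number of trailing zeros of a block `b : Fin L → Bool`. -/
def trailingZeros {L : ℕ} (b : Fin L → Bool) : ℕ :=
  (Finset.univ.filter (fun i : Fin L => ∀ j : Fin L, i ≤ j → b j = false)).card

/-- The m-LOTZ benchmark, with `h = m/2` blocks of length `L = 2n/m`.
Objective `k` (0-based): leading ones of block `k/2` if `k` even, trailing zeros otherwise. -/
def mLOTZ (h L : ℕ) (x : Fin h → Fin L → Bool) : Fin (2 * h) → ℕ :=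
  fun k =>
    if (k : ℕ) % 2 = 0 then leadingOnes (x ⟨(k : ℕ) / 2, by have := k.isLt; omega⟩)
    else trailingZeros (x ⟨(k : ℕ) / 2, by have := k.isLt; omega⟩)

/-- `x` weakly dominates `y` with respect to the objective vector `f`. -/
def WeaklyDom {α : Type*} {m : ℕ} (f : α → Fin m → ℕ) (x y : α) : Prop :=
  ∀ k, f y k ≤ f x k

/-- `x` dominates `y`. -/
def Dom {α : Type*} {m : ℕ} (f : α → Fin m → ℕ) (x y : α) : Prop :=
  WeaklyDom f x y ∧ ∃ k, f y k < f x k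

/-- `x` is Pareto-optimal. -/
def ParetoOpt {α : Type*} {m : ℕ} (f : α → Fin m → ℕ) (x : α) : Prop :=
  ¬ ∃ y, Dom f y x

lemma lower_mem_iff {L : ℕ} (S : Finset (Fin L))
    (hS : ∀ i j : Fin L, j ≤ i → i ∈ S → j ∈ S) (i : Fin L) :
    i ∈ S ↔ (i : ℕ) < S.card := by
  constructor
  · intro hi
    have h1 : Finset.Iic i ⊆ S := fun j hj => hS i j (Finset.mem_Iic.mp hj) hi
    have := Finset.card_le_card h1
    rw [Fin.card_Iic] at this
    omega
  · intro hi
    by_contra hni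
    have h1 : S ⊆ Finset.Iio i := by
      intro j hj
      rw [Finset.mem_Iio]
      by_contra hji
      exact hni (hS j i (le_of_not_gt hji) hj)
    have := Finset.card_le_card h1
    rw [Fin.card_Iio] at this
    omega

lemma upper_mem_iff {L : ℕ} (S : Finset (Fin L))
    (hS : ∀ i j : Fin L, i ≤ j → i ∈ S → j ∈ S) (i : Fin L) :
    i ∈ S ↔ L - S.card ≤ (i : ℕ) := by
  constructor
  · intro hi
    have h1 : Finset.Ici i ⊆ S := fun j hj => hS i j (Finset.mem_Ici.mp hj) hi
    have := Finset.card_le_card h1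
    rw [Fin.card_Ici] at this
    omega
  · intro hi
    by_contra hni
    have h1 : S ⊆ Finset.Ioi i := by
      intro j hj
      rw [Finset.mem_Ioi]
      by_contra hji
      exact hni (hS j i (le_of_not_gt hji) hj)
    have := Finset.card_le_card h1
    rw [Fin.card_Ioi] at this
    have hiL := i.isLt
    omega

lemma mem_LO_iff {L : ℕ} (b : Fin L → Bool) (i : Fin L) :
    (∀ j : Fin L, j ≤ i → b j = true) ↔ (i : ℕ) < leadingOnes b := by
  have := lower_mem_iff (Finset.univ.filter (fun i : Fin L => ∀ j : Fin L, j ≤ i → b j = true))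
    (by intro a c hca ha
        simp only [Finset.mem_filter, Finset.mem_univ, true_and] at *
        exact fun j hj => ha j (le_trans hj hca)) i
  simpa [leadingOnes] using this

lemma mem_TZ_iff {L : ℕ} (b : Fin L → Bool) (i : Fin L) :
    (∀ j : Fin L, i ≤ j → b j = false) ↔ L - trailingZeros b ≤ (i : ℕ) := by
  have := upper_mem_iff (Finset.univ.filter (fun i : Fin L => ∀ j : Fin L, i ≤ j → b j = false))
    (by intro a c hac ha
        simp only [Finset.mem_filter, Finset.mem_univ, true_and] at *
        exact fun j hj => ha j (le_trans hac hj)) i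
  simpa [trailingZeros] using this

lemma LO_le {L : ℕ} (b : Fin L → Bool) : leadingOnes b ≤ L := by
  have := Finset.card_filter_le (Finset.univ : Finset (Fin L))
    (fun i : Fin L => ∀ j : Fin L, j ≤ i → b j = true)
  simpa [leadingOnes] using this

lemma TZ_le {L : ℕ} (b : Fin L → Bool) : trailingZeros b ≤ L := by
  have := Finset.card_filter_le (Finset.univ : Finset (Fin L))
    (fun i : Fin L => ∀ j : Fin L, i ≤ j → b j = false)
  simpa [trailingZeros] using this

lemma LO_true {L : ℕ} (b : Fin L → Bool) (j : Fin L) (hj : (j : ℕ) < leadingOnes b) :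
    b j = true := ((mem_LO_iff b j).mpr hj) j le_rfl

lemma TZ_false {L : ℕ} (b : Fin L → Bool) (j : Fin L) (hj : L - trailingZeros b ≤ (j : ℕ)) :
    b j = false := ((mem_TZ_iff b j).mpr hj) j le_rfl

lemma LO_add_TZ_le {L : ℕ} (b : Fin L → Bool) : leadingOnes b + trailingZeros b ≤ L := by
  by_contra hc
  push_neg at hc
  have hLO := LO_le b
  have hTZ := TZ_le b
  have hpos : 0 < trailingZeros b := by omega
  have hlt : L - trailingZeros b < L := by omega
  have hlo : L - trailingZeros b < leadingOnes b := by omega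
  have h1 := LO_true b ⟨L - trailingZeros b, hlt⟩ hlo
  have h2 := TZ_false b ⟨L - trailingZeros b, hlt⟩ le_rfl
  simp [h1] at h2

def blk {L : ℕ} (c : ℕ) : Fin L → Bool := fun j => decide ((j : ℕ) < c)

lemma LO_blk {L : ℕ} (c : ℕ) (hc : c ≤ L) : leadingOnes (blk (L := L) c) = c := by
  rcases lt_trichotomy (leadingOnes (blk (L := L) c)) c with hlt | heq | hgt
  · exfalso
    have hL : leadingOnes (blk (L := L) c) < L := lt_of_lt_of_le hlt hc
    have := (mem_LO_iff (blk (L := L) c) ⟨_, hL⟩).not.mpr (by simp)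
    push_neg at this
    obtain ⟨j, hj, hbj⟩ := this
    simp only [Fin.le_def] at hj
    simp only [blk, decide_eq_true_eq, Bool.not_eq_true, decide_eq_false_iff_not] at hbj
    omega
  · exact heq
  · exfalso
    have hcL : c < L := lt_of_lt_of_le hgt (LO_le _)
    have := LO_true (blk (L := L) c) ⟨c, hcL⟩ hgt
    simp [blk] at this
  
lemma TZ_blk {L : ℕ} (c : ℕ) (hc : c ≤ L) : trailingZeros (blk (L := L) c) = L - c := by
  set t := trailingZeros (blk (L := L) c) with ht
  have htle := TZ_le (blk (L := L) c)
  rcases lt_trichotomy t (L - c) with hlt | heq | hgt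
  · exfalso
    -- index L - t - 1 ≥ c, should be in T but then b at it is false; b val = decide(< c) false ok...
    -- i ∉ T for i = L - t - 1? i ∈ T ↔ L - t ≤ i. Take i := L - t - 1; L-t ≤ L so t < L - c ≤ L means t < L, i < L.
    have hiL : L - t - 1 < L := by omega
    have := (mem_TZ_iff (blk (L := L) c) ⟨L - t - 1, hiL⟩).not.mpr (by simp; omega)
    push_neg at this
    obtain ⟨j, hj, hbj⟩ := this
    simp only [blk, decide_eq_false_iff_not, not_not] at hbj
    have : (j : ℕ) < c := by simpa [blk] using hbj
    have hj' : (⟨L - t - 1, hiL⟩ : Fin L) ≤ j := hj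
    simp [Fin.le_def] at hj'
    omega
  · exact heq
  · exfalso
    have hiL : L - t < L := by omega
    have := TZ_false (blk (L := L) c) ⟨L - t, hiL⟩ (by simp; omega)
    simp [blk] at this
    omega

lemma eq_blk_of_sum {L : ℕ} (b : Fin L → Bool) (hsum : leadingOnes b + trailingZeros b = L) :
    b = blk (leadingOnes b) := by
  funext j
  by_cases hj : (j : ℕ) < leadingOnes b
  · simp [blk, hj, LO_true b j hj]
  · have : L - trailingZeros b ≤ (j : ℕ) := by omega
    simp [blk, hj, TZ_false b j this]

lemma mLOTZ_even {h L : ℕ} (x : Fin h → Fin L → Bool) (k : Fin (2 * h)) (q : Fin h)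
    (hk : (k : ℕ) = 2 * q) : mLOTZ h L x k = leadingOnes (x q) := by
  unfold mLOTZ
  rw [if_pos (by omega)]
  congr 1
  exact congrArg x (Fin.ext (by simp only; omega))

lemma mLOTZ_odd {h L : ℕ} (x : Fin h → Fin L → Bool) (k : Fin (2 * h)) (q : Fin h)
    (hk : (k : ℕ) = 2 * q + 1) : mLOTZ h L x k = trailingZeros (x q) := by
  unfold mLOTZ
  rw [if_neg (by omega)]
  congr 1
  exact congrArg x (Fin.ext (by simp only; omega))

def gvec (h L : ℕ) (a : Fin h → Fin (L + 1)) : Fin (2 * h) → ℕ :=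
  fun k =>
    if (k : ℕ) % 2 = 0 then (a ⟨(k : ℕ) / 2, by have := k.isLt; omega⟩ : ℕ)
    else L - (a ⟨(k : ℕ) / 2, by have := k.isLt; omega⟩ : ℕ)

def Xpt (h L : ℕ) (a : Fin h → Fin (L + 1)) : Fin h → Fin L → Bool :=
  fun q => blk (a q)

lemma mLOTZ_Xpt (h L : ℕ) (a : Fin h → Fin (L + 1)) :
    mLOTZ h L (Xpt h L a) = gvec h L a := by
  funext k
  unfold mLOTZ gvec Xpt
  have := (a ⟨(k : ℕ) / 2, by have := k.isLt; omega⟩).isLt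
  split
  · exact LO_blk _ (by omega)
  · exact TZ_blk _ (by omega)

lemma pareto_Xpt (h L : ℕ) (a : Fin h → Fin (L + 1)) :
    ParetoOpt (mLOTZ h L) (Xpt h L a) := by
  rintro ⟨y, hw, k0, hk0⟩
  have key : ∀ q : Fin h, leadingOnes (y q) = (a q : ℕ) ∧
      trailingZeros (y q) = L - (a q : ℕ) := by
    intro q
    have hq := q.isLt
    have haq := (a q).isLt
    have h1 := hw ⟨2 * q, by omega⟩
    have h2 := hw ⟨2 * q + 1, by omega⟩
    rw [mLOTZ_even (Xpt h L a) _ q rfl, mLOTZ_even y _ q rfl] at h1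
    rw [mLOTZ_odd (Xpt h L a) _ q rfl, mLOTZ_odd y _ q rfl] at h2
    unfold Xpt at h1 h2
    rw [LO_blk _ (by omega)] at h1
    rw [TZ_blk _ (by omega)] at h2
    have := LO_add_TZ_le (y q)
    omega
  have heq : mLOTZ h L y = mLOTZ h L (Xpt h L a) := by
    funext k
    have hk := k.isLt
    by_cases hpar : (k : ℕ) % 2 = 0
    · set q : Fin h := ⟨(k : ℕ) / 2, by omega⟩ with hqdef
      rw [mLOTZ_even y k q (by simp [hqdef]; omega),
        mLOTZ_even (Xpt h L a) k q (by simp [hqdef]; omega)]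
      unfold Xpt
      rw [LO_blk _ (by have := (a q).isLt; omega)]
      exact (key q).1
    · set q : Fin h := ⟨(k : ℕ) / 2, by omega⟩ with hqdef
      rw [mLOTZ_odd y k q (by simp [hqdef]; omega),
        mLOTZ_odd (Xpt h L a) k q (by simp [hqdef]; omega)]
      unfold Xpt
      rw [TZ_blk _ (by have := (a q).isLt; omega)]
      exact (key q).2
  rw [heq] at hk0
  exact lt_irrefl _ hk0

lemma pareto_sum {h L : ℕ} (x : Fin h → Fin L → Bool) (hx : ParetoOpt (mLOTZ h L) x)
    (q0 : Fin h) : leadingOnes (x q0) + trailingZeros (x q0) = L := by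
  by_contra hne
  have hlt : leadingOnes (x q0) + trailingZeros (x q0) < L :=
    lt_of_le_of_ne (LO_add_TZ_le _) hne
  set c := leadingOnes (x q0) with hc
  set t := trailingZeros (x q0) with htd
  classical
  set y : Fin h → Fin L → Bool := Function.update x q0 (blk (c + 1)) with hy
  have hyq0 : y q0 = blk (c + 1) := by simp [hy]
  have hyq : ∀ q, q ≠ q0 → y q = x q := by
    intro q hq; simp [hy, Function.update_of_ne hq]
  apply hx
  refine ⟨y, ?_, ⟨⟨2 * q0, by have := q0.isLt; omega⟩, ?_⟩⟩
  · intro k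
    have hk := k.isLt
    set q : Fin h := ⟨(k : ℕ) / 2, by omega⟩ with hqdef
    by_cases hqq : q = q0
    · by_cases hpar : (k : ℕ) % 2 = 0
      · rw [mLOTZ_even y k q (by simp [hqdef]; omega),
          mLOTZ_even x k q (by simp [hqdef]; omega), hqq, hyq0,
          LO_blk _ (by omega)]
        omega
      · rw [mLOTZ_odd y k q (by simp [hqdef]; omega),
          mLOTZ_odd x k q (by simp [hqdef]; omega), hqq, hyq0,
          TZ_blk _ (by omega)]
        omega
    · by_cases hpar : (k : ℕ) % 2 = 0
      · rw [mLOTZ_even y k q (by simp [hqdef]; omega),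
          mLOTZ_even x k q (by simp [hqdef]; omega), hyq q hqq]
      · rw [mLOTZ_odd y k q (by simp [hqdef]; omega),
          mLOTZ_odd x k q (by simp [hqdef]; omega), hyq q hqq]
  · rw [mLOTZ_even y _ q0 rfl, mLOTZ_even x _ q0 rfl, hyq0, LO_blk _ (by omega)]
    omega

theorem mLOTZ_pareto_front_card (h L : ℕ) (hh : 1 ≤ h) (hL : 1 ≤ L) :
    Nat.card {v : Fin (2 * h) → ℕ //
      ∃ x : Fin h → Fin L → Bool, ParetoOpt (mLOTZ h L) x ∧ mLOTZ h L x = v} =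
      (L + 1) ^ h := by
  have hginj : Function.Injective (gvec h L) := by
    intro a a' hgg
    funext q
    have hq := q.isLt
    have := congrFun hgg ⟨2 * q, by omega⟩
    unfold gvec at this
    rw [if_pos (by simp), if_pos (by simp)] at this
    have hidx : (⟨((⟨2 * (q:ℕ), by omega⟩ : Fin (2*h)) : ℕ) / 2, by omega⟩ : Fin h) = q :=
      Fin.ext (by simp)
    rw [hidx] at this
    exact Fin.ext this
  have hiff : ∀ v : Fin (2 * h) → ℕ,
      (∃ x : Fin h → Fin L → Bool, ParetoOpt (mLOTZ h L) x ∧ mLOTZ h L x = v) ↔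
      v ∈ Set.range (gvec h L) := by
    intro v
    constructor
    · rintro ⟨x, hpo, rfl⟩
      refine ⟨fun q => ⟨leadingOnes (x q), Nat.lt_succ_of_le (LO_le _)⟩, ?_⟩
      have hxe : x = Xpt h L (fun q => ⟨leadingOnes (x q), Nat.lt_succ_of_le (LO_le _)⟩) := by
        funext q
        exact eq_blk_of_sum (x q) (pareto_sum x hpo q)
      rw [← mLOTZ_Xpt, ← hxe]
    · rintro ⟨a, rfl⟩
      exact ⟨Xpt h L a, pareto_Xpt h L a, mLOTZ_Xpt h L a⟩
  have e := (Equiv.subtypeEquivRight hiff).trans (Equiv.ofInjective _ hginj).symm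
  rw [Nat.card_congr e]
  simp [Nat.card_eq_fintype_card]
end

section
/- Let m ≥ 1, F ≥ 1 real, and p ≥ 2·m^{3/2}·F a natural number. Let v, w ∈ [0,1]^m be nonzero vectors such that there exist indices i ≠ j with w_i ≥ v_i + 1/F and v_j ≥ w_j + 1/F. Then the angle between v and w is strictly larger than twice arcsin(m/p). Consequently v and w cannot both be within angle arcsin(m/p) of a common nonzero reference direction. -/
open Real InnerProductGeometry RealInnerProductSpace

theorem my_angle_triangle_unit {V : Type*} [NormedAddCommGroup V] [InnerProductSpace ℝ V]
    (x y z : V) (hx : ‖x‖ = 1) (hy : ‖y‖ = 1) (hz : ‖z‖ = 1) :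
    angle x y ≤ angle x z + angle y z := by
  by_cases hπ : π ≤ angle x z + angle y z
  · exact (angle_le_pi x y).trans hπ
  push_neg at hπ
  set a := angle x z with ha
  set b := angle y z with hb
  have ha0 := angle_nonneg x z
  have haπ := angle_le_pi x z
  have hb0 := angle_nonneg y z
  have hbπ := angle_le_pi y z
  have hP : Real.cos a = ⟪x, z⟫ := by rw [ha, cos_angle, hx, hz]; simp
  have hQ : Real.cos b = ⟪y, z⟫ := by rw [hb, cos_angle, hy, hz]; simp
  have hR : Real.cos (angle x y) = ⟪x, y⟫ := by rw [cos_angle, hx, hy]; simp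
  set P : ℝ := ⟪x, z⟫ with hPdef
  set Q : ℝ := ⟪y, z⟫ with hQdef
  have hzz : ⟪z, z⟫ = (1 : ℝ) := by
    rw [real_inner_self_eq_norm_sq, hz]; norm_num
  have hCS : |⟪x - P • z, y - Q • z⟫| ≤ ‖x - P • z‖ * ‖y - Q • z‖ :=
    abs_real_inner_le_norm _ _
  have hinner : ⟪x - P • z, y - Q • z⟫ = ⟪x, y⟫ - P * Q := by
    simp only [inner_sub_left, inner_sub_right, real_inner_smul_left, real_inner_smul_right,
      hzz]
    have h2 : ⟪z, y⟫ = Q := by rw [real_inner_comm]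
    rw [h2, ← hPdef]
    ring
  have hnx : ‖x - P • z‖ = Real.sqrt (1 - P ^ 2) := by
    rw [show (1 - P ^ 2) = ‖x - P • z‖ ^ 2 by
      rw [norm_sub_sq_real, real_inner_smul_right, norm_smul, hx, hz]
      simp [← hPdef, abs_of_nonneg, sq_abs]; ring]
    exact (Real.sqrt_sq (norm_nonneg _)).symm
  have hny : ‖y - Q • z‖ = Real.sqrt (1 - Q ^ 2) := by
    rw [show (1 - Q ^ 2) = ‖y - Q • z‖ ^ 2 by
      rw [norm_sub_sq_real, real_inner_smul_right, norm_smul, hy, hz]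
      simp [← hQdef, abs_of_nonneg, sq_abs]; ring]
    exact (Real.sqrt_sq (norm_nonneg _)).symm
  have hsina : Real.sin a = Real.sqrt (1 - P ^ 2) := by
    rw [Real.sin_eq_sqrt_one_sub_cos_sq ha0 haπ, hP]
  have hsinb : Real.sin b = Real.sqrt (1 - Q ^ 2) := by
    rw [Real.sin_eq_sqrt_one_sub_cos_sq hb0 hbπ, hQ]
  have hcos : Real.cos (a + b) ≤ Real.cos (angle x y) := by
    rw [Real.cos_add, hR, hP, hQ, hsina, hsinb]
    have := abs_le.mp hCS
    rw [hinner, hnx, hny] at this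
    linarith [this.1]
  by_contra hcon
  push_neg at hcon
  have := Real.strictAntiOn_cos ⟨by linarith, le_of_lt hπ⟩
      ⟨angle_nonneg x y, angle_le_pi x y⟩ hcon
  linarith

theorem my_angle_triangle {V : Type*} [NormedAddCommGroup V] [InnerProductSpace ℝ V]
    (x y z : V) (hx : x ≠ 0) (hy : y ≠ 0) (hz : z ≠ 0) :
    angle x y ≤ angle x z + angle y z := by
  have hx' : (0:ℝ) < ‖x‖⁻¹ := inv_pos.mpr (norm_pos_iff.mpr hx)
  have hy' : (0:ℝ) < ‖y‖⁻¹ := inv_pos.mpr (norm_pos_iff.mpr hy)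
  have hz' : (0:ℝ) < ‖z‖⁻¹ := inv_pos.mpr (norm_pos_iff.mpr hz)
  have h := my_angle_triangle_unit (‖x‖⁻¹ • x) (‖y‖⁻¹ • y) (‖z‖⁻¹ • z)
    (norm_smul_inv_norm hx) (norm_smul_inv_norm hy) (norm_smul_inv_norm hz)
  simpa [angle_smul_left_of_pos _ _ hx', angle_smul_left_of_pos _ _ hy',
    angle_smul_right_of_pos _ _ hy', angle_smul_right_of_pos _ _ hz'] using h

theorem my_arcsin_doubling {y : ℝ} (hy : 0 < y) (h2 : 2 * y ≤ 1) :
    2 * Real.arcsin y < Real.arcsin (2 * y) := by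
  have hy1 : y ≤ 1 := by linarith
  have hs2 : (1:ℝ) ≤ Real.sqrt 2 := by
    nlinarith [Real.sq_sqrt (by norm_num : (0:ℝ) ≤ 2), Real.sqrt_nonneg 2]
  have hpi := Real.pi_pos
  have hquarter : Real.arcsin y ≤ π / 4 := by
    rw [Real.arcsin_le_iff_le_sin ⟨by linarith, hy1⟩ ⟨by linarith, by linarith⟩,
      Real.sin_pi_div_four]
    linarith
  have h0 : 0 ≤ Real.arcsin y := Real.arcsin_nonneg.mpr hy.le
  rw [Real.lt_arcsin_iff_sin_lt ⟨by linarith, by linarith⟩ ⟨by linarith, h2⟩,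
    Real.sin_two_mul, Real.sin_arcsin (by linarith) hy1, Real.cos_arcsin]
  have hlt : Real.sqrt (1 - y ^ 2) < 1 := by
    have h := Real.sqrt_lt_sqrt (by nlinarith : (0:ℝ) ≤ 1 - y^2) (by nlinarith : 1 - y^2 < 1)
    rwa [Real.sqrt_one] at h
  nlinarith

set_option maxHeartbeats 2000000 in
theorem angle_separation (m : ℕ) (hm : 1 ≤ m) (F : ℝ) (hF : 1 ≤ F) (p : ℕ)
    (hp : 2 * m * Real.sqrt m * F ≤ (p : ℝ))
    (v w : EuclideanSpace ℝ (Fin m))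
    (hv : ∀ k, 0 ≤ v k ∧ v k ≤ 1) (hw : ∀ k, 0 ≤ w k ∧ w k ≤ 1)
    (hv0 : v ≠ 0) (hw0 : w ≠ 0)
    (i j : Fin m) (hij : i ≠ j)
    (hi : v i + 1 / F ≤ w i) (hj : w j + 1 / F ≤ v j) :
    2 * Real.arcsin ((m : ℝ) / p) < InnerProductGeometry.angle v w ∧
    ∀ r : EuclideanSpace ℝ (Fin m), r ≠ 0 →
      ¬ (InnerProductGeometry.angle v r ≤ Real.arcsin ((m : ℝ) / p) ∧
         InnerProductGeometry.angle w r ≤ Real.arcsin ((m : ℝ) / p)) := by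
  have hF0 : (0:ℝ) < F := by linarith
  have hm1 : (1:ℝ) ≤ (m:ℝ) := by exact_mod_cast hm
  have hsm : (1:ℝ) ≤ Real.sqrt m := by
    rw [show (1:ℝ) = Real.sqrt 1 by rw [Real.sqrt_one]]
    exact Real.sqrt_le_sqrt hm1
  have hp0 : (0:ℝ) < (p:ℝ) := by
    have h1 : (1:ℝ) ≤ (m:ℝ) * Real.sqrt m := by nlinarith
    have h2 : (1:ℝ) ≤ (m:ℝ) * Real.sqrt m * F := by nlinarith
    linarith
  -- Step A : 2D inequality
  have stepA : ∀ t : ℝ, (1/F)^2 ≤ (v i - t * w i)^2 + (v j - t * w j)^2 := by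
    intro t
    obtain ⟨hvi0, hvi1⟩ := hv i
    obtain ⟨hvj0, hvj1⟩ := hv j
    obtain ⟨hwi0, hwi1⟩ := hw i
    obtain ⟨hwj0, hwj1⟩ := hw j
    rcases le_total t 1 with ht | ht
    · have hkey : 1/F ≤ v j - t * w j := by
        rcases le_total t 0 with ht0 | ht0
        · nlinarith [mul_nonneg (neg_nonneg.mpr ht0) hwj0]
        · have h1 : t * w j ≤ t * (v j - 1/F) :=
            mul_le_mul_of_nonneg_left (by linarith) ht0
          have h2 : (1 - t) * (1/F) ≤ (1 - t) * v j :=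
            mul_le_mul_of_nonneg_left (by nlinarith) (by linarith)
          nlinarith
      nlinarith [sq_nonneg (v i - t * w i), mul_nonneg (by positivity : (0:ℝ) ≤ 1/F)
        (by linarith : (0:ℝ) ≤ v j - t * w j - 1/F)]
    · have hkey : 1/F ≤ t * w i - v i := by
        have h1 : t * (v i + 1/F) ≤ t * w i :=
          mul_le_mul_of_nonneg_left hi (by linarith)
        nlinarith
      nlinarith [sq_nonneg (v j - t * w j), mul_nonneg (by positivity : (0:ℝ) ≤ 1/F)
        (by linarith : (0:ℝ) ≤ t * w i - v i - 1/F)]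
  -- inner products as sums
  have hinner_sum : ∀ x y : EuclideanSpace ℝ (Fin m), ⟪x, y⟫ = ∑ k, x k * y k := by
    intro x y
    rw [PiLp.inner_apply]
    exact Finset.sum_congr rfl fun k _ => by
      simp [RCLike.inner_apply, mul_comm]
  set A : ℝ := ⟪v, v⟫ with hA
  set B : ℝ := ⟪v, w⟫ with hB
  set C : ℝ := ⟪w, w⟫ with hC
  have hnv0 : 0 < ‖v‖ := norm_pos_iff.mpr hv0
  have hnw0 : 0 < ‖w‖ := norm_pos_iff.mpr hw0
  have hC0 : 0 < C := by rw [hC, real_inner_self_eq_norm_sq]; exact pow_pos hnw0 2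
  set t₀ : ℝ := B / C with ht₀
  set u : EuclideanSpace ℝ (Fin m) := v - t₀ • w with hu
  have hu_apply : ∀ k, u k = v k - t₀ * w k := by
    intro k
    simp only [hu, PiLp.sub_apply, PiLp.smul_apply, smul_eq_mul]
  have hu_norm : ‖u‖^2 = ∑ k, (v k - t₀ * w k)^2 := by
    rw [EuclideanSpace.norm_eq, Real.sq_sqrt (by positivity)]
    exact Finset.sum_congr rfl fun k _ => by rw [hu_apply k, Real.norm_eq_abs, sq_abs]
  have hsum : (1/F)^2 ≤ ‖u‖^2 := by
    rw [hu_norm]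
    calc (1/F)^2 ≤ (v i - t₀ * w i)^2 + (v j - t₀ * w j)^2 := stepA t₀
      _ = ∑ k ∈ ({i, j} : Finset (Fin m)), (v k - t₀ * w k)^2 :=
          (Finset.sum_pair (f := fun k => (v k - t₀ * w k)^2) hij).symm
      _ ≤ ∑ k, (v k - t₀ * w k)^2 :=
          Finset.sum_le_sum_of_subset_of_nonneg (Finset.subset_univ _)
            (fun k _ _ => sq_nonneg _)
  have hu_norm' : ‖u‖^2 = A - 2 * t₀ * B + t₀^2 * C := by
    rw [hu, norm_sub_sq_real, real_inner_smul_right, norm_smul, ← hB]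
    rw [real_inner_self_eq_norm_sq] at hA hC
    rw [← hA]
    rw [mul_pow, Real.norm_eq_abs, sq_abs, ← hC]
    ring
  have hgram : C * (1/F)^2 ≤ A * C - B * B := by
    have h1 : C * ‖u‖^2 = A * C - B * B := by
      rw [hu_norm', ht₀]
      field_simp
      ring
    nlinarith
  -- sine lower bound
  set θ := InnerProductGeometry.angle v w with hθ
  have hnv : ‖v‖ ≤ Real.sqrt m := by
    rw [show ‖v‖ = Real.sqrt (‖v‖^2) by rw [Real.sqrt_sq (norm_nonneg v)]]
    apply Real.sqrt_le_sqrt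
    rw [EuclideanSpace.norm_eq, Real.sq_sqrt (by positivity)]
    calc ∑ k, ‖v k‖^2 ≤ ∑ _k : Fin m, (1:ℝ) := Finset.sum_le_sum fun k _ => by
          rw [Real.norm_eq_abs, sq_abs]; nlinarith [(hv k).1, (hv k).2]
      _ = m := by simp
  have hsin_eq : Real.sin θ * (‖v‖ * ‖w‖) = Real.sqrt (A * C - B * B) := by
    rw [hθ, sin_angle_mul_norm_mul_norm, ← hA, ← hB, ← hC]
  have hwC : Real.sqrt C = ‖w‖ := by
    rw [hC, real_inner_self_eq_norm_sq, Real.sqrt_sq (norm_nonneg w)]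
  have hS : ‖w‖ / F ≤ Real.sqrt (A * C - B * B) := by
    calc ‖w‖ / F = Real.sqrt (C * (1/F)^2) := by
          rw [Real.sqrt_mul hC0.le, Real.sqrt_sq (by positivity), hwC]
          field_simp
      _ ≤ Real.sqrt (A * C - B * B) := Real.sqrt_le_sqrt hgram
  have hsin : 1 / (Real.sqrt m * F) ≤ Real.sin θ := by
    have heq : Real.sin θ = Real.sqrt (A * C - B * B) / (‖v‖ * ‖w‖) := by
      rw [← hsin_eq]; field_simp
    rw [heq]
    calc 1 / (Real.sqrt m * F) = (‖w‖ / F) / (Real.sqrt m * ‖w‖) := by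
          field_simp
      _ ≤ Real.sqrt (A * C - B * B) / (‖v‖ * ‖w‖) :=
          div_le_div₀ (Real.sqrt_nonneg _) hS (by positivity)
            (mul_le_mul_of_nonneg_right hnv hnw0.le)
  -- θ ≤ π/2
  have hB0 : 0 ≤ B := by
    rw [hB, hinner_sum]
    exact Finset.sum_nonneg fun k _ => mul_nonneg (hv k).1 (hw k).1
  have hθ0 := InnerProductGeometry.angle_nonneg v w
  have hθπ := InnerProductGeometry.angle_le_pi v w
  have hcosθ : 0 ≤ Real.cos θ := by
    rw [hθ, InnerProductGeometry.cos_angle, ← hB]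
    positivity
  have hθhalf : θ ≤ π / 2 := by
    by_contra hcon
    push_neg at hcon
    have := Real.cos_neg_of_pi_div_two_lt_of_lt hcon (by linarith [Real.pi_pos])
    linarith
  -- arithmetic on m/p
  have hxpos : 0 < (m:ℝ) / p := by positivity
  have h2xb : 2 * ((m:ℝ)/p) ≤ 1 / (Real.sqrt m * F) := by
    rw [show 2 * ((m:ℝ)/p) = (2*m)/p by ring, div_le_div_iff₀ hp0 (by positivity)]
    nlinarith
  have hone : 1 / (Real.sqrt m * F) ≤ 1 := by
    rw [div_le_one (by positivity)]
    nlinarith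
  have h2x1 : 2 * ((m:ℝ)/p) ≤ 1 := h2xb.trans hone
  have hchain : 2 * Real.arcsin ((m:ℝ)/p) < θ := by
    calc 2 * Real.arcsin ((m:ℝ)/p) < Real.arcsin (2 * ((m:ℝ)/p)) :=
          my_arcsin_doubling hxpos h2x1
      _ ≤ Real.arcsin (1 / (Real.sqrt m * F)) := Real.monotone_arcsin h2xb
      _ ≤ Real.arcsin (Real.sin θ) := Real.monotone_arcsin hsin
      _ = θ := Real.arcsin_sin (by linarith [Real.pi_pos]) hθhalf
  refine ⟨hchain, ?_⟩
  intro r hr ⟨h1, h2⟩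
  have htri := my_angle_triangle v w r hv0 hw0 hr
  rw [InnerProductGeometry.angle_comm w r] at htri
  rw [InnerProductGeometry.angle_comm r w] at htri
  linarith
end
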